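/- Let γ = γ_{p,q,l} and suppose π ∈ S_{p+q+l} and σ ∈ S_NC(p,q,l) with π ≤ σ⁻¹γ. If π ∈ NC(p) × NC(q) × NC(l) (a product of three non-crossing permutations, one on each circle), then σ ≲^{(2)} γπ⁻¹: for each block B of σ ∨ γπ⁻¹ the restriction σ|_B is non-crossing with respect to (γπ⁻¹)|_B, and #(σ ∨ γπ⁻¹) = #(γπ⁻¹) − 2. -/

import Mathlib

open Equiv

namespace ThirdOrderFree

variable {α : Type*}

/-- The setoid whose classes are the cycles (orbits) of a permutation. -/
def sameCycleSetoid (σ : Perm α) : Setoid α :=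
  ⟨σ.SameCycle,
    ⟨fun x => Equiv.Perm.SameCycle.refl σ x, fun h => h.symm, fun h h' => h.trans h'⟩⟩

/-- Number of cycles (orbits, including fixed points) of a permutation. -/
noncomputable def numCycles (σ : Perm α) : ℕ :=
  Nat.card (Quotient (sameCycleSetoid σ))

/-- The length `|σ| = n - #(σ)`. -/
noncomputable def len (σ : Perm α) : ℕ :=
  Nat.card α - numCycles σ

/-- Join of the cycle partitions of two permutations. -/
def joinSetoid (π σ : Perm α) : Setoid α :=
  sameCycleSetoid π ⊔ sameCycleSetoid σ

/-- Number of blocks of `π ∨ σ`. -/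
noncomputable def numBlocks (π σ : Perm α) : ℕ :=
  Nat.card (Quotient (joinSetoid π σ))

/-- `π ∨ σ` is the one-block partition. -/
def JoinTop (π σ : Perm α) : Prop :=
  ∀ x y : α, (joinSetoid π σ).r x y

/-- `π` is a non-crossing (annular) permutation with respect to `γ`. -/
def SNC (γ π : Perm α) : Prop :=
  JoinTop π γ ∧
    numCycles π + numCycles (π⁻¹ * γ) + numCycles γ = Nat.card α + 2

/-- `τ` separates the points of `N`: no cycle of `τ` contains two distinct points of `N`. -/
def Separates (τ : Perm α) (N : Set α) : Prop :=
  ∀ x ∈ N, ∀ y ∈ N, τ.SameCycle x y → x = y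

/-- The first-return map of `σ` on the set `{x | p x}`. -/
noncomputable def firstReturn (σ : Perm α) (p : α → Prop) (x : α) : α :=
  (σ ^ sInf {k : ℕ | 0 < k ∧ p ((σ ^ k) x)}) x

open Classical in
/-- The restriction of `σ` to `{x | p x}`: the unique permutation agreeing with the
first-return map (it exists whenever `α` is finite). -/
noncomputable def restrictPerm (σ : Perm α) (p : α → Prop) : Perm {x // p x} :=
  if h : ∃ e : Perm {x // p x}, ∀ x : {x // p x}, (e x : α) = firstReturn σ p (x : α)
  then h.choose else 1

/-- `π ≤ σ` : each cycle of `π` is contained in a cycle of `σ` and on each cycle of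
`σ` the restriction of `π` is a non-crossing permutation of that cycle. -/
def le' (π σ : Perm α) : Prop :=
  (∀ x y : α, π.SameCycle x y → σ.SameCycle x y) ∧
  ∀ x : α,
    numCycles (restrictPerm π (σ.SameCycle x)) +
      numCycles ((restrictPerm π (σ.SameCycle x))⁻¹ * restrictPerm σ (σ.SameCycle x)) =
      Nat.card {y // σ.SameCycle x y} + 1

/-- `π ≲ σ` : on each block of `π ∨ σ`, `π` is annular non-crossing w.r.t. `σ`. -/
def ncRel (π σ : Perm α) : Prop :=
  ∀ x : α,
    SNC (restrictPerm σ ((joinSetoid π σ).r x)) (restrictPerm π ((joinSetoid π σ).r x))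

/-- The permutation of `Σ i, Fin (n i)` rotating each block: the product of the
directed cycles `T i` of lengths `n i`. -/
def blockRotate {ι : Type*} (n : ι → ℕ) : Perm ((i : ι) × Fin (n i)) :=
  Equiv.sigmaCongrRight fun i => finRotate (n i)

/-- The first elements of the blocks. -/
def zeroSection {ι : Type*} (n : ι → ℕ) (hn : ∀ i, 0 < n i) :
    ι ≃ {x : (i : ι) × Fin (n i) // x.2.val = 0} where
  toFun i := ⟨⟨i, ⟨0, hn i⟩⟩, rfl⟩
  invFun x := x.1.1
  left_inv i := rfl
  right_inv := fun x => by
    obtain ⟨⟨i, j⟩, hj⟩ := x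
    exact Subtype.ext (congrArg (Sigma.mk i) (Fin.ext hj.symm))

/-- `π_{\vec n}` : merge the blocks `T i` along the cycles of `π`; within a block it
moves forward, and the last element of block `i` is sent to the first element of
block `π i`. -/
def mergePerm {ι : Type*} (n : ι → ℕ) (hn : ∀ i, 0 < n i) (π : Perm ι) :
    Perm ((i : ι) × Fin (n i)) :=
  (π.extendDomain (zeroSection n hn)) * blockRotate n



lemma _root_.Equiv.Perm.apply_inv_self {β : Type*} (f : Perm β) (x : β) : f (f⁻¹ x) = x :=
  f.apply_symm_apply x

lemma _root_.Equiv.Perm.inv_apply_self {β : Type*} (f : Perm β) (x : β) : f⁻¹ (f x) = x :=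
  f.symm_apply_apply x

section Counting
variable {α : Type*}

lemma setoid_rel_of_sameCycle [Finite α] (r : Setoid α) (f : Perm α)
    (h : ∀ z, r z (f z)) {x y : α} (hxy : f.SameCycle x y) : r x y := by
  suffices H : ∀ n : ℕ, r x ((f ^ n) x) by
    obtain ⟨i, -, rfl⟩ := hxy.exists_pow_eq'
    exact H i
  intro n
  induction n with
  | zero => simpa using r.refl x
  | succ n ih => rw [pow_succ']; exact r.trans ih (h _)

lemma pow_mod_cycle (f : Perm α) {x : α} {m : ℕ} (hm : (f ^ m) x = x) (i : ℕ) :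
    (f ^ i) x = (f ^ (i % m)) x := by
  conv_lhs => rw [← Nat.div_add_mod i m]
  rw [add_comm, pow_add, Perm.mul_apply, pow_mul,
    Perm.pow_apply_eq_self_of_apply_eq_self hm]

/-- The setoid obtained from `s` by merging the classes of `u` and `v`. -/
def extSetoid (s : Setoid α) (u v : α) : Setoid α :=
  ⟨fun x y => s x y ∨ (s x u ∧ s v y) ∨ (s x v ∧ s u y), by
    constructor
    · exact fun x => Or.inl (s.refl x)
    · rintro x y (h | ⟨h1, h2⟩ | ⟨h1, h2⟩)
      · exact Or.inl (s.symm h)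
      · exact Or.inr (Or.inr ⟨s.symm h2, s.symm h1⟩)
      · exact Or.inr (Or.inl ⟨s.symm h2, s.symm h1⟩)
    · rintro x y z (h | ⟨h1, h2⟩ | ⟨h1, h2⟩) (h' | ⟨h1', h2'⟩ | ⟨h1', h2'⟩)
      · exact Or.inl (s.trans h h')
      · exact Or.inr (Or.inl ⟨s.trans h h1', h2'⟩)
      · exact Or.inr (Or.inr ⟨s.trans h h1', h2'⟩)
      · exact Or.inr (Or.inl ⟨h1, s.trans h2 h'⟩)
      · exact Or.inl (s.trans h1 (s.trans (s.symm (s.trans h2 h1')) h2'))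
      · exact Or.inl (s.trans h1 h2')
      · exact Or.inr (Or.inr ⟨h1, s.trans h2 h'⟩)
      · exact Or.inl (s.trans h1 h2')
      · exact Or.inl (s.trans h1 (s.trans (s.symm (s.trans h2 h1')) h2'))⟩

lemma extSetoid_rel {s : Setoid α} {u v x y : α} :
    extSetoid s u v x y ↔ s x y ∨ (s x u ∧ s v y) ∨ (s x v ∧ s u y) := Iff.rfl

lemma le_extSetoid (s : Setoid α) (u v : α) : s ≤ extSetoid s u v :=
  Setoid.le_def.mpr fun h => Or.inl h

lemma extSetoid_rel_uv (s : Setoid α) (u v : α) : extSetoid s u v u v :=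
  Or.inr (Or.inl ⟨s.refl u, s.refl v⟩)

variable [Finite α]

lemma card_quot_le_of_le {s t : Setoid α} (h : s ≤ t) :
    Nat.card (Quotient t) ≤ Nat.card (Quotient s) := by
  have hsurj : Function.Surjective
      (Quotient.map' (s₁ := s) (s₂ := t) id (fun x y hxy => Setoid.le_def.mp h hxy)) := by
    intro d
    induction d using Quotient.inductionOn' with
    | h x => exact ⟨Quotient.mk'' x, rfl⟩
  exact Nat.card_le_card_of_surjective _ hsurj

lemma card_quot_extSetoid {s : Setoid α} {u v : α} (h : ¬ s u v) :
    Nat.card (Quotient s) = Nat.card (Quotient (extSetoid s u v)) + 1 := by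
  classical
  set t := extSetoid s u v with ht
  have hle : s ≤ t := le_extSetoid s u v
  have hΦw : ∀ x y : α, s x y → t x y := fun x y hxy => Setoid.le_def.mp hle hxy
  set Φ : Quotient s → Quotient t := Quotient.map' id (fun x y hxy => hΦw x y hxy) with hΦ
  have hΦmk : ∀ x : α, Φ (Quotient.mk'' x) = Quotient.mk'' x := fun x => rfl
  set Ψ : Quotient s → Quotient t ⊕ Unit :=
    fun c => if c = Quotient.mk'' v then Sum.inr () else Sum.inl (Φ c) with hΨ
  have hbij : Function.Bijective Ψ := by
    constructor
    · intro c c' hcc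
      by_cases hc : c = Quotient.mk'' v <;> by_cases hc' : c' = Quotient.mk'' v <;>
        simp only [hΨ, hc, hc', if_pos, if_neg, if_true, if_false] at hcc
      · rw [hc, hc']
      · exact absurd hcc (by simp)
      · exact absurd hcc (by simp)
      · simp only [Sum.inl.injEq] at hcc
        induction c using Quotient.inductionOn' with | h x => ?_
        induction c' using Quotient.inductionOn' with | h y => ?_
        rw [hΦmk, hΦmk] at hcc
        rcases Quotient.eq''.mp hcc with h1 | ⟨h1, h2⟩ | ⟨h1, h2⟩
        · exact Quotient.sound' h1
        · exact absurd (Quotient.sound' (s.symm h2)) hc'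
        · exact absurd (Quotient.sound' h1) hc
    · intro d
      rcases d with d | u'
      · induction d using Quotient.inductionOn' with
        | h x =>
          by_cases hxv : s x v
          · refine ⟨Quotient.mk'' u, ?_⟩
            have hne : (Quotient.mk'' u : Quotient s) ≠ Quotient.mk'' v :=
              fun e => h (Quotient.exact' e)
            have : Φ (Quotient.mk'' u) = Quotient.mk'' x :=
              Quotient.sound' (Or.inr (Or.inl ⟨s.refl u, s.symm hxv⟩))
            simp [hΨ, hne, this]
          · refine ⟨Quotient.mk'' x, ?_⟩
            have hne : (Quotient.mk'' x : Quotient s) ≠ Quotient.mk'' v :=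
              fun e => hxv (Quotient.exact' e)
            simp [hΨ, hne, hΦmk]
      · exact ⟨Quotient.mk'' v, by simp [hΨ]⟩
  have := Nat.card_eq_of_bijective Ψ hbij
  simpa [Nat.card_sum] using this

lemma card_quot_le_extSetoid (s : Setoid α) (u v : α) :
    Nat.card (Quotient s) ≤ Nat.card (Quotient (extSetoid s u v)) + 1 := by
  by_cases h : s u v
  · have h1 : extSetoid s u v ≤ s := Setoid.le_def.mpr (by
      rintro x y (h' | ⟨h1, h2⟩ | ⟨h1, h2⟩)
      · exact h'
      · exact s.trans h1 (s.trans h h2)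
      · exact s.trans h1 (s.trans (s.symm h) h2))
    have h2 := card_quot_le_of_le h1
    omega
  · exact (card_quot_extSetoid h).le

end Counting

section Swap
variable {α : Type*} [Finite α] [DecidableEq α] {σ : Perm α} {a b : α}

lemma sameCycle_swap_mul_refines (h : σ.SameCycle a b) {x y : α}
    (hxy : (swap a b * σ).SameCycle x y) : σ.SameCycle x y := by
  refine setoid_rel_of_sameCycle (sameCycleSetoid σ) _ (fun z => ?_) hxy
  show σ.SameCycle z ((swap a b * σ) z)
  have hz : σ.SameCycle z (σ z) := ⟨1, by simp⟩
  rw [Perm.mul_apply]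
  by_cases h1 : σ z = a
  · rw [h1, swap_apply_left]; exact (h1 ▸ hz).trans h
  · by_cases h2 : σ z = b
    · rw [h2, swap_apply_right]; exact (h2 ▸ hz).trans h.symm
    · rw [swap_apply_of_ne_of_ne h1 h2]; exact hz

lemma sameCycle_mul_swap_ext (σ : Perm α) (a b : α) {x y : α} (hxy : σ.SameCycle x y) :
    extSetoid (sameCycleSetoid (swap a b * σ)) a b x y := by
  refine setoid_rel_of_sameCycle _ _ (fun z => ?_) hxy
  have hz : (swap a b * σ).SameCycle z ((swap a b * σ) z) := ⟨1, by simp⟩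
  by_cases h1 : (swap a b * σ) z = a
  · have : σ z = b := by
      have := congrArg (swap a b) h1
      rwa [Perm.mul_apply, swap_apply_self, swap_apply_left] at this
    rw [this]
    exact Or.inr (Or.inl ⟨⟨1, by simpa using h1⟩, Perm.SameCycle.refl _ b⟩)
  · by_cases h2 : (swap a b * σ) z = b
    · have : σ z = a := by
        have := congrArg (swap a b) h2
        rwa [Perm.mul_apply, swap_apply_self, swap_apply_right] at this
      rw [this]
      exact Or.inr (Or.inr ⟨⟨1, by simpa using h2⟩, Perm.SameCycle.refl _ a⟩)
    · have ha : σ z ≠ a := fun e => h2 (by rw [Perm.mul_apply, e, swap_apply_left])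
      have hb : σ z ≠ b := fun e => h1 (by rw [Perm.mul_apply, e, swap_apply_right])
      have : σ z = (swap a b * σ) z := by
        rw [Perm.mul_apply, swap_apply_of_ne_of_ne ha hb]
      rw [this]
      exact Or.inl hz

lemma not_sameCycle_swap_mul (hab : a ≠ b) (h : σ.SameCycle a b) :
    ¬ (swap a b * σ).SameCycle a b := by
  classical
  obtain ⟨m0, hm0pos, -, hm0⟩ := h.exists_pow_eq''
  have hex : ∃ k, 0 < k ∧ (σ ^ k) a = b := ⟨m0, hm0pos, hm0⟩
  set M := Nat.find hex with hM
  obtain ⟨hMpos, hMb⟩ : 0 < M ∧ (σ ^ M) a = b := Nat.find_spec hex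
  have hfindmin : ∀ {m : ℕ}, m < M → ¬(0 < m ∧ (σ ^ m) a = b) := fun hm => Nat.find_min hex hm
  clear_value M
  have key : ∀ j, j < M → ((swap a b * σ) ^ j) a = (σ ^ j) a := by
    intro j
    induction j with
    | zero => simp
    | succ n ih =>
      intro hn
      have hn' : n < M := Nat.lt_of_succ_lt hn
      have e1 : ((swap a b * σ) ^ (n + 1)) a = swap a b ((σ ^ (n + 1)) a) := by
        rw [pow_succ' (swap a b * σ) n, Perm.mul_apply, ih hn', pow_succ' σ n,
          Perm.mul_apply, Perm.mul_apply]
      have hne_b : (σ ^ (n + 1)) a ≠ b := fun e =>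
        hfindmin hn ⟨n.succ_pos, e⟩
      have hne_a : (σ ^ (n + 1)) a ≠ a := by
        intro e
        have e2 : (σ ^ (M - (n + 1))) ((σ ^ (n + 1)) a) = b := by
          rw [← Perm.mul_apply, ← pow_add, Nat.sub_add_cancel hn.le]
          exact hMb
        rw [e] at e2
        exact hfindmin (by omega : M - (n + 1) < M) ⟨by omega, e2⟩
      rw [e1, swap_apply_of_ne_of_ne hne_a hne_b]
  have hMfix : ((swap a b * σ) ^ M) a = a := by
    obtain ⟨M', rfl⟩ : ∃ M', M = M' + 1 := ⟨M - 1, by omega⟩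
    rw [pow_succ' (swap a b * σ) M', Perm.mul_apply, key M' (by omega), Perm.mul_apply,
      ← Perm.mul_apply σ, ← pow_succ', hMb, swap_apply_right]
  intro hcon
  obtain ⟨i, -, hi⟩ := hcon.exists_pow_eq'
  rw [pow_mod_cycle _ hMfix i] at hi
  rcases Nat.eq_zero_or_pos (i % M) with h0 | hpos
  · rw [h0, pow_zero] at hi; exact hab hi
  · have hlt : i % M < M := Nat.mod_lt _ hMpos
    rw [key _ hlt] at hi
    exact hfindmin hlt ⟨hpos, hi⟩

lemma sameCycleSetoid_eq_ext (hab : a ≠ b) (h : σ.SameCycle a b) :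
    sameCycleSetoid σ = extSetoid (sameCycleSetoid (swap a b * σ)) a b := by
  apply Setoid.ext
  intro x y
  constructor
  · exact fun hxy => sameCycle_mul_swap_ext σ a b hxy
  · rintro (h1 | ⟨h1, h2⟩ | ⟨h1, h2⟩)
    · exact sameCycle_swap_mul_refines h h1
    · exact ((sameCycle_swap_mul_refines h h1).trans h).trans (sameCycle_swap_mul_refines h h2)
    · exact ((sameCycle_swap_mul_refines h h1).trans h.symm).trans (sameCycle_swap_mul_refines h h2)

lemma numCycles_swap_mul (hab : a ≠ b) (h : σ.SameCycle a b) :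
    numCycles (swap a b * σ) = numCycles σ + 1 := by
  unfold numCycles
  rw [sameCycleSetoid_eq_ext hab h]
  exact card_quot_extSetoid (not_sameCycle_swap_mul hab h)

lemma sameCycle_swap_mul_of_not (h : ¬ σ.SameCycle a b) : (swap a b * σ).SameCycle a b := by
  classical
  have hab : a ≠ b := fun e => h (e ▸ Perm.SameCycle.refl σ a)
  have hex : ∃ k, 0 < k ∧ (σ ^ k) a = a :=
    ⟨orderOf σ, orderOf_pos σ, by rw [pow_orderOf_eq_one]; rfl⟩
  set M := Nat.find hex with hM
  obtain ⟨hMpos, hMa⟩ : 0 < M ∧ (σ ^ M) a = a := Nat.find_spec hex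
  have hfindmin : ∀ {m : ℕ}, m < M → ¬(0 < m ∧ (σ ^ m) a = a) := fun hm => Nat.find_min hex hm
  clear_value M
  have key : ∀ j, j < M → ((swap a b * σ) ^ j) a = (σ ^ j) a := by
    intro j
    induction j with
    | zero => simp
    | succ n ih =>
      intro hn
      have hn' : n < M := Nat.lt_of_succ_lt hn
      have e1 : ((swap a b * σ) ^ (n + 1)) a = swap a b ((σ ^ (n + 1)) a) := by
        rw [pow_succ' (swap a b * σ) n, Perm.mul_apply, ih hn', pow_succ' σ n,
          Perm.mul_apply, Perm.mul_apply]
      have hne_b : (σ ^ (n + 1)) a ≠ b := fun e =>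
        h ⟨(((n + 1 : ℕ)) : ℤ), by rw [zpow_natCast]; exact e⟩
      have hne_a : (σ ^ (n + 1)) a ≠ a := fun e =>
        hfindmin hn ⟨n.succ_pos, e⟩
      rw [e1, swap_apply_of_ne_of_ne hne_a hne_b]
  have hMb : ((swap a b * σ) ^ M) a = b := by
    obtain ⟨M', rfl⟩ : ∃ M', M = M' + 1 := ⟨M - 1, by omega⟩
    rw [pow_succ' (swap a b * σ) M', Perm.mul_apply, key M' (by omega), Perm.mul_apply,
      ← Perm.mul_apply σ, ← pow_succ', hMa, swap_apply_left]
  exact ⟨(M : ℤ), by rw [zpow_natCast]; exact hMb⟩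

lemma numCycles_swap_mul_of_not (h : ¬ σ.SameCycle a b) :
    numCycles σ = numCycles (swap a b * σ) + 1 := by
  have hab : a ≠ b := fun e => h (e ▸ Perm.SameCycle.refl σ a)
  have h2 := numCycles_swap_mul (σ := swap a b * σ) hab (sameCycle_swap_mul_of_not h)
  rwa [← mul_assoc, swap_mul_self, one_mul] at h2

lemma numCycles_le_card (σ : Perm α) : numCycles σ ≤ Nat.card α :=
  Nat.card_le_card_of_surjective (Quotient.mk'' (s₁ := sameCycleSetoid σ))
    (fun d => Quotient.inductionOn' d (fun x => ⟨x, rfl⟩))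

lemma numCycles_one : numCycles (1 : Perm α) = Nat.card α := by
  unfold numCycles
  refine (Nat.card_eq_of_bijective (Quotient.mk'' (s₁ := sameCycleSetoid 1)) ⟨?_, ?_⟩).symm
  · intro x y e
    exact Perm.sameCycle_one.mp (Quotient.exact' e)
  · exact fun d => Quotient.inductionOn' d (fun x => ⟨x, rfl⟩)

end Swap

section Euler
variable {α : Type*} [Finite α] [DecidableEq α]

lemma crossing (A B' : Perm α) (u v : α) (s : Setoid α)
    (hA : ∀ z, s z (A z)) (hB : ∀ z, s z (B' z)) (huv : ¬ s u v) :
    (A * (swap u v * B')).SameCycle (A u) (A v) := by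
  classical
  set ρ := A * (swap u v * B') with hρ
  have hρz : ∀ z, ρ z = A (swap u v (B' z)) := fun z => rfl
  set z₀ := B'⁻¹ u with hz₀
  have hz₀app : ρ z₀ = A v := by rw [hρz, hz₀, Perm.apply_inv_self, swap_apply_left]
  have hz₀u : s z₀ u := by have := hB z₀; rwa [hz₀, Perm.apply_inv_self] at this
  have h1 : ¬ s (A v) z₀ := by
    intro hc
    have c1 : s v z₀ := s.trans (hA v) hc
    have c2 : s v u := s.trans c1 hz₀u
    exact huv (s.symm c2)
  have hsc0 : ρ.SameCycle z₀ (A v) := ⟨1, by simpa using hz₀app⟩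
  have hsc : ρ.SameCycle (A v) z₀ := hsc0.symm
  obtain ⟨n, hn0, -, hnn⟩ := hsc.exists_pow_eq''
  have hPn : ¬ s (A v) ((ρ ^ n) (A v)) := by rw [hnn]; exact h1
  have hexP : ∃ j, ¬ s (A v) ((ρ ^ j) (A v)) := ⟨n, hPn⟩
  have hkspec := Nat.find_spec hexP
  have hkmin : ∀ {m : ℕ}, m < Nat.find hexP → s (A v) ((ρ ^ m) (A v)) :=
    fun hm => not_not.mp (Nat.find_min hexP hm)
  set k := Nat.find hexP with hk
  have hkpos : 0 < k := by
    rcases Nat.eq_zero_or_pos k with h0 | h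
    · exfalso; apply hkspec; rw [h0, pow_zero]; exact s.refl _
    · exact h
  have hsw : s (A v) ((ρ ^ (k - 1)) (A v)) := hkmin (by omega)
  clear_value k
  set w := (ρ ^ (k - 1)) (A v) with hw
  have hρw : (ρ ^ k) (A v) = ρ w := by
    have hps : ρ ^ k = ρ * ρ ^ (k - 1) := by
      conv_lhs => rw [show k = (k - 1) + 1 by omega]
      rw [pow_succ']
    rw [hps, Perm.mul_apply, ← hw]
  have hNw : ¬ s (A v) (ρ w) := by rw [← hρw]; exact hkspec
  have hNw' : ¬ s w (ρ w) := fun hh => hNw (s.trans hsw hh)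
  by_cases hb1 : B' w = u
  · exfalso
    apply hNw
    have he : ρ w = A v := by rw [hρz, hb1, swap_apply_left]
    rw [he]
  · by_cases hb2 : B' w = v
    · have hfin : (ρ ^ k) (A v) = A u := by rw [hρw, hρz, hb2, swap_apply_right]
      have hfin2 : ρ.SameCycle (A v) (A u) := ⟨(k : ℤ), by rw [zpow_natCast]; exact hfin⟩
      exact hfin2.symm
    · exfalso
      apply hNw'
      rw [hρz, swap_apply_of_ne_of_ne hb1 hb2]
      exact s.trans (hB w) (hA (B' w))

lemma euler_one (A : Perm α) :
    numCycles A + numCycles (1 : Perm α) + numCycles (A * 1) ≤ Nat.card α + 2 * numBlocks A 1 := by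
  rw [mul_one, numCycles_one]
  have hjoin : joinSetoid A 1 = sameCycleSetoid A := by
    apply sup_eq_left.mpr
    refine Setoid.le_def.mpr fun {x y} h => ?_
    have hxy : x = y := Perm.sameCycle_one.mp h
    subst hxy
    exact Perm.SameCycle.refl A x
  unfold numBlocks numCycles
  rw [hjoin]
  omega

theorem euler (A B : Perm α) :
    numCycles A + numCycles B + numCycles (A * B) ≤ Nat.card α + 2 * numBlocks A B := by
  have main : ∀ (n : ℕ) (B : Perm α), Nat.card α - numCycles B ≤ n →
      numCycles A + numCycles B + numCycles (A * B) ≤ Nat.card α + 2 * numBlocks A B := by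
    intro n
    induction n with
    | zero =>
      intro B hB
      by_cases hne : B = 1
      · subst hne; exact euler_one A
      · exfalso
        obtain ⟨u, hu⟩ : ∃ u, B u ≠ u := by
          by_contra hforall; push_neg at hforall
          exact hne (Equiv.ext fun x => by simp [hforall x])
        have hBuv : B.SameCycle u (B u) := ⟨1, by simp⟩
        have huv : u ≠ B u := Ne.symm hu
        have h5 := numCycles_swap_mul huv hBuv
        have h1 := numCycles_le_card (swap u (B u) * B)
        omega
    | succ n ih =>
      intro B hB
      by_cases hne : B = 1
      · subst hne; exact euler_one A
      · obtain ⟨u, hu⟩ : ∃ u, B u ≠ u := by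
          by_contra hforall; push_neg at hforall
          exact hne (Equiv.ext fun x => by simp [hforall x])
        set v := B u with hv
        have huv : u ≠ v := Ne.symm hu
        have hBuv : B.SameCycle u v := ⟨1, by simp [hv]⟩
        set B' := swap u v * B with hB'
        have h5 : numCycles B' = numCycles B + 1 := numCycles_swap_mul huv hBuv
        have hBle : numCycles B' ≤ Nat.card α := numCycles_le_card B'
        have hIH := ih B' (by omega)
        have hswapB : swap u v * B' = B := by rw [hB', ← mul_assoc, swap_mul_self, one_mul]
        have hconj : A * B' = swap (A u) (A v) * (A * B) := by
          rw [swap_apply_apply, hB']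
          simp [mul_assoc]
        have hAuv : A u ≠ A v := fun e => huv (A.injective e)
        have hsB'B : sameCycleSetoid B' ≤ sameCycleSetoid B :=
          Setoid.le_def.mpr fun {x y} h => sameCycle_swap_mul_refines hBuv h
        have hjle : joinSetoid A B' ≤ joinSetoid A B := sup_le_sup_left hsB'B _
        have hb_le : numBlocks A B ≤ numBlocks A B' := card_quot_le_of_le hjle
        by_cases hc : (A * B).SameCycle (A u) (A v)
        · have h6 : numCycles (A * B') = numCycles (A * B) + 1 := by
            rw [hconj]; exact numCycles_swap_mul hAuv hc
          have hext : joinSetoid A B ≤ extSetoid (joinSetoid A B') u v := by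
            apply sup_le
            · exact le_trans le_sup_left (le_extSetoid _ u v)
            · refine Setoid.le_def.mpr fun {x y} h => ?_
              rcases sameCycle_mul_swap_ext B u v h with h1 | ⟨h1, h2⟩ | ⟨h1, h2⟩
              · exact Or.inl (Setoid.le_def.mp (le_sup_right (a := sameCycleSetoid A)) h1)
              · exact Or.inr (Or.inl ⟨Setoid.le_def.mp le_sup_right h1,
                  Setoid.le_def.mp le_sup_right h2⟩)
              · exact Or.inr (Or.inr ⟨Setoid.le_def.mp le_sup_right h1,
                  Setoid.le_def.mp le_sup_right h2⟩)
          have q2 := card_quot_le_extSetoid (joinSetoid A B') u v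
          have q1 := card_quot_le_of_le hext
          unfold numBlocks at *
          omega
        · have hsuv : (joinSetoid A B') u v := by
            by_contra h'
            apply hc
            have hcr := crossing A B' u v (joinSetoid A B')
              (fun z => Setoid.le_def.mp le_sup_left (⟨1, by simp⟩ : A.SameCycle z (A z)))
              (fun z => Setoid.le_def.mp le_sup_right (⟨1, by simp⟩ : B'.SameCycle z (B' z)))
              h'
            rwa [hswapB] at hcr
          have hjge : joinSetoid A B ≤ joinSetoid A B' := by
            apply sup_le le_sup_left
            refine Setoid.le_def.mpr fun {x y} h => ?_
            rcases sameCycle_mul_swap_ext B u v h with h1 | ⟨h1, h2⟩ | ⟨h1, h2⟩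
            · exact Setoid.le_def.mp le_sup_right h1
            · exact (joinSetoid A B').trans (Setoid.le_def.mp le_sup_right h1)
                ((joinSetoid A B').trans hsuv (Setoid.le_def.mp le_sup_right h2))
            · exact (joinSetoid A B').trans (Setoid.le_def.mp le_sup_right h1)
                ((joinSetoid A B').trans ((joinSetoid A B').symm hsuv)
                  (Setoid.le_def.mp le_sup_right h2))
          have hb_eq : numBlocks A B' = numBlocks A B :=
            le_antisymm (card_quot_le_of_le hjge) hb_le
          have h6 : numCycles (A * B) = numCycles (A * B') + 1 := by
            have hm := numCycles_swap_mul_of_not (σ := A * B) (a := A u) (b := A v) hc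
            rwa [← hconj] at hm
          omega
  exact main _ B le_rfl

end Euler

section Conn
variable {α : Type*} [Finite α]

lemma surj_noninj_card {A B : Type*} [Finite A] (f : A → B) (hs : Function.Surjective f)
    {a a' : A} (hne : a ≠ a') (heq : f a = f a') : Nat.card B + 1 ≤ Nat.card A := by
  classical
  have hB : Finite B := Finite.of_surjective f hs
  have fA : Fintype A := Fintype.ofFinite A
  have fB : Fintype B := Fintype.ofFinite B
  have hni : ¬ Function.Injective f := fun hi => hne (hi heq)
  have hlt := Fintype.card_lt_of_surjective_not_injective f hs hni
  rw [Nat.card_eq_fintype_card, Nat.card_eq_fintype_card]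
  omega

lemma card_quot_empty (s : Setoid α) (h : IsEmpty α) : Nat.card (Quotient s) = 0 := by
  have : IsEmpty (Quotient s) := ⟨fun d => Quotient.inductionOn' d fun x => isEmptyElim x⟩
  exact Nat.card_of_isEmpty

theorem conn (u : Setoid α) : ∀ (n : ℕ) (t : Setoid α), Nat.card (Quotient t) ≤ n →
    (∀ x y : α, (t ⊔ u) x y) →
    Nat.card (Quotient t) + Nat.card (Quotient u) ≤ Nat.card (Quotient (t ⊓ u)) + 1 := by
  intro n
  induction n with
  | zero =>
    intro t ht h
    rcases isEmpty_or_nonempty α with hemp | hne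
    · rw [card_quot_empty t hemp, card_quot_empty u hemp]; omega
    · exfalso
      have hne' : Nonempty (Quotient t) := ⟨Quotient.mk'' (Classical.arbitrary α)⟩
      have hpos : 0 < Nat.card (Quotient t) := Nat.card_pos
      omega
  | succ n ih =>
    intro t ht h
    rcases isEmpty_or_nonempty α with hemp | hne
    · rw [card_quot_empty t hemp, card_quot_empty u hemp]; omega
    by_cases hut : u ≤ t
    · have hsup : t ⊔ u = t := sup_eq_left.mpr hut
      have hinf : t ⊓ u = u := inf_eq_right.mpr hut
      rw [hinf]
      have e1 : Nat.card (Quotient t) = 1 := by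
        rw [Nat.card_eq_one_iff_unique]
        refine ⟨⟨fun c d => ?_⟩, ⟨Quotient.mk'' (Classical.arbitrary α)⟩⟩
        induction c using Quotient.inductionOn' with | h x => ?_
        induction d using Quotient.inductionOn' with | h y => ?_
        refine Quotient.sound' ?_
        have hxy := h x y
        rwa [hsup] at hxy
      omega
    · obtain ⟨x, y, hu_xy, ht_xy⟩ : ∃ x y, u x y ∧ ¬ t x y := by
        by_contra hc
        push_neg at hc
        exact hut (Setoid.le_def.mpr fun {x y} hxy => hc x y hxy)
      set t' := extSetoid t x y with ht'
      have e1 : Nat.card (Quotient t) = Nat.card (Quotient t') + 1 := card_quot_extSetoid ht_xy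
      have h' : ∀ a b : α, (t' ⊔ u) a b := fun a b =>
        Setoid.le_def.mp (sup_le_sup_right (le_extSetoid t x y) u) (h a b)
      have hIH := ih t' (by omega) h'
      have hle : t ⊓ u ≤ t' ⊓ u :=
        le_inf (inf_le_left.trans (le_extSetoid t x y)) inf_le_right
      have hsurj : Function.Surjective
          (Quotient.map' (s₁ := t ⊓ u) (s₂ := t' ⊓ u) id (fun a b hab => Setoid.le_def.mp hle hab)) :=
        fun d => Quotient.inductionOn' d fun z => ⟨Quotient.mk'' z, rfl⟩
      have hxy' : (Quotient.mk'' x : Quotient (t ⊓ u)) ≠ Quotient.mk'' y :=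
        fun e => ht_xy (Setoid.inf_iff_and.mp (Quotient.exact' e)).1
      have heqm : Quotient.map' (s₁ := t ⊓ u) (s₂ := t' ⊓ u) id (fun a b hab => Setoid.le_def.mp hle hab) (Quotient.mk'' x)
          = Quotient.map' id (fun a b hab => Setoid.le_def.mp hle hab) (Quotient.mk'' y) := by
        refine Quotient.sound' (Setoid.inf_iff_and.mpr ⟨extSetoid_rel_uv t x y, hu_xy⟩)
      have hcard := surj_noninj_card _ hsurj hxy' heqm
      omega

end Conn

section Restrict
variable {α : Type*} [Finite α]

lemma firstReturn_eq_apply (σ : Perm α) (p : α → Prop) (hp : ∀ x, p x ↔ p (σ x)) {x : α}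
    (hx : p x) : firstReturn σ p x = σ x := by
  have h1 : 1 ∈ {k : ℕ | 0 < k ∧ p ((σ ^ k) x)} := ⟨one_pos, by rw [pow_one]; exact (hp x).mp hx⟩
  have hinf : sInf {k : ℕ | 0 < k ∧ p ((σ ^ k) x)} = 1 := by
    have hle := Nat.sInf_le h1
    have hmem := (Nat.sInf_mem (⟨1, h1⟩ : {k : ℕ | 0 < k ∧ p ((σ ^ k) x)}.Nonempty)).1
    omega
  rw [firstReturn, hinf, pow_one]

lemma restrictPerm_eq_subtypePerm (σ : Perm α) (p : α → Prop) (hp : ∀ x, p x ↔ p (σ x)) :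
    restrictPerm σ p = σ.subtypePerm (fun x => (hp x).symm) := by
  have hex : ∃ e : Perm {x // p x}, ∀ x : {x // p x}, (e x : α) = firstReturn σ p (x : α) :=
    ⟨σ.subtypePerm (fun x => (hp x).symm), fun x => by rw [firstReturn_eq_apply σ p hp x.2]; rfl⟩
  rw [restrictPerm, dif_pos hex]
  apply Equiv.ext
  intro x
  apply Subtype.ext
  rw [hex.choose_spec x, firstReturn_eq_apply σ p hp x.2]
  rfl

lemma subtypePerm_sameCycle_iff {p : α → Prop} (σ : Perm α) (hp : ∀ x, p x ↔ p (σ x))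
    {x y : {z // p z}} :
    (σ.subtypePerm (fun x => (hp x).symm)).SameCycle x y ↔ σ.SameCycle (x : α) (y : α) := by
  constructor
  · intro h
    obtain ⟨i, -, rfl⟩ := h.exists_pow_eq'
    refine ⟨(i : ℤ), ?_⟩
    rw [zpow_natCast, Perm.subtypePerm_pow]
    rfl
  · intro h
    obtain ⟨i, -, hi⟩ := h.exists_pow_eq'
    refine ⟨(i : ℤ), ?_⟩
    rw [zpow_natCast, Perm.subtypePerm_pow]
    exact Subtype.ext hi

lemma card_eq_sum_fibers {A B : Type*} [Finite A] [Fintype B] (g : A → B) :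
    Nat.card A = ∑ b : B, Nat.card {a // g a = b} := by
  classical
  have hA : Fintype A := Fintype.ofFinite A
  rw [Nat.card_eq_fintype_card, ← Fintype.card_congr (Equiv.sigmaFiberEquiv g),
    Fintype.card_sigma]
  simp [Nat.card_eq_fintype_card]

lemma numCycles_eq_sum (t : Setoid α) [Fintype (Quotient t)] (f : Perm α)
    (hf : ∀ z, t z (f z)) (F : Quotient t → ℕ)
    (hF : ∀ x : α, F (Quotient.mk'' x) = numCycles (restrictPerm f (fun y => t x y))) :
    numCycles f = ∑ c : Quotient t, F c := by
  classical
  have hinv : ∀ x z : α, t x z ↔ t x (f z) :=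
    fun x z => ⟨fun h => t.trans h (hf z), fun h => t.trans h (t.symm (hf z))⟩
  have hwd : ∀ a b : α, f.SameCycle a b → t a b :=
    fun a b hab => setoid_rel_of_sameCycle t f hf hab
  set Φ : Quotient (sameCycleSetoid f) → Quotient t :=
    Quotient.map' id (fun a b hab => hwd a b hab) with hΦ
  rw [numCycles, card_eq_sum_fibers Φ]
  refine Finset.sum_congr rfl fun c _ => ?_
  induction c using Quotient.inductionOn' with | h x => ?_
  rw [hF x, restrictPerm_eq_subtypePerm f _ (hinv x), numCycles]
  refine (Nat.card_eq_of_bijective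
    (fun d : Quotient (sameCycleSetoid (f.subtypePerm (fun z => (hinv x z).symm))) => Quotient.liftOn' d
      (fun (y : {y // t x y}) => (⟨Quotient.mk'' (y : α), Quotient.sound' (t.symm y.2)⟩ :
        {d : Quotient (sameCycleSetoid f) // Φ d = Quotient.mk'' x}))
      (fun y z hyz => Subtype.ext
        (Quotient.sound' ((subtypePerm_sameCycle_iff f (hinv x)).mp hyz)))) ⟨?_, ?_⟩).symm
  · intro c d hcd
    induction c using Quotient.inductionOn' with | h y => ?_
    induction d using Quotient.inductionOn' with | h z => ?_
    have h1 : (Quotient.mk'' (y : α) : Quotient (sameCycleSetoid f)) = Quotient.mk'' (z : α) :=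
      congrArg Subtype.val hcd
    have h2 : f.SameCycle (y : α) (z : α) := Quotient.exact' h1
    exact Quotient.sound' ((subtypePerm_sameCycle_iff f (hinv x)).mpr h2)
  · rintro ⟨d, hd⟩
    induction d using Quotient.inductionOn' with | h w => ?_
    have hw : t x w := t.symm (Quotient.exact' hd)
    exact ⟨Quotient.mk'' (⟨w, hw⟩ : {y // t x y}), Subtype.ext rfl⟩

lemma card_eq_sum_classes (t : Setoid α) [Fintype (Quotient t)]
    (G : Quotient t → ℕ) (hG : ∀ x : α, G (Quotient.mk'' x) = Nat.card {y // t x y}) :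
    Nat.card α = ∑ c : Quotient t, G c := by
  classical
  rw [card_eq_sum_fibers (Quotient.mk'' : α → Quotient t)]
  refine Finset.sum_congr rfl fun c _ => ?_
  induction c using Quotient.inductionOn' with | h x => ?_
  rw [hG x]
  refine Nat.card_eq_of_bijective (fun a => ⟨a.1, t.symm (Quotient.exact' a.2)⟩) ⟨?_, ?_⟩
  · intro a b hab
    apply Subtype.ext
    have h1 := congrArg Subtype.val hab
    simpa using h1
  · rintro ⟨y, hy⟩
    exact ⟨⟨y, Quotient.sound' (t.symm hy)⟩, rfl⟩

lemma numCycles_eq_one {β : Type*} [Finite β] [Nonempty β] (f : Perm β)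
    (h : ∀ x y : β, f.SameCycle x y) : numCycles f = 1 := by
  rw [numCycles, Nat.card_eq_one_iff_unique]
  refine ⟨⟨fun c d => ?_⟩, ⟨Quotient.mk'' (Classical.arbitrary β)⟩⟩
  induction c using Quotient.inductionOn' with | h x => ?_
  induction d using Quotient.inductionOn' with | h y => ?_
  exact Quotient.sound' (h x y)

lemma numCycles_conj (g f : Perm α) : numCycles (g * f * g⁻¹) = numCycles f := by
  unfold numCycles
  have hwd : ∀ a b : α, f.SameCycle a b → (g * f * g⁻¹).SameCycle (g a) (g b) := by
    rintro a b ⟨i, hi⟩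
    exact ⟨i, by rw [conj_zpow]; simp [Perm.mul_apply, hi]⟩
  refine (Nat.card_eq_of_bijective
    (fun c => Quotient.liftOn' c
      (fun z => (Quotient.mk'' (g z) : Quotient (sameCycleSetoid (g * f * g⁻¹))))
      (fun a b hab => Quotient.sound' (hwd a b hab))) ⟨?_, ?_⟩).symm
  · intro c d hcd
    induction c using Quotient.inductionOn' with | h y => ?_
    induction d using Quotient.inductionOn' with | h z => ?_
    obtain ⟨i, hi⟩ : (g * f * g⁻¹).SameCycle (g y) (g z) := Quotient.exact' hcd
    rw [conj_zpow] at hi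
    simp only [Perm.mul_apply, Perm.inv_apply_self] at hi
    exact Quotient.sound' ⟨i, g.injective hi⟩
  · intro d
    induction d using Quotient.inductionOn' with | h z => ?_
    exact ⟨Quotient.mk'' (g⁻¹ z), by simp [Quotient.liftOn'_mk'']⟩

end Restrict

section RestrictMore
variable {α : Type*} [Finite α]

lemma restrictPerm_mul (σ τ : Perm α) (p : α → Prop)
    (hσ : ∀ x, p x ↔ p (σ x)) (hτ : ∀ x, p x ↔ p (τ x)) :
    restrictPerm σ p * restrictPerm τ p = restrictPerm (σ * τ) p := by
  rw [restrictPerm_eq_subtypePerm σ p hσ, restrictPerm_eq_subtypePerm τ p hτ,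
    restrictPerm_eq_subtypePerm (σ * τ) p (fun x => (hτ x).trans (hσ (τ x))),
    Perm.subtypePerm_mul]

lemma restrictPerm_inv (σ : Perm α) (p : α → Prop) (hσ : ∀ x, p x ↔ p (σ x)) :
    (restrictPerm σ p)⁻¹ = restrictPerm σ⁻¹ p := by
  have hσ' : ∀ x, p x ↔ p (σ⁻¹ x) := fun x => by
    have h2 := hσ (σ⁻¹ x)
    rw [Perm.apply_inv_self] at h2
    exact h2.symm
  rw [restrictPerm_eq_subtypePerm σ p hσ, restrictPerm_eq_subtypePerm σ⁻¹ p hσ']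
  exact (Perm.subtypePerm_inv σ (fun x => (hσ' x).symm)).symm

lemma joinTop_restrict (σ τ : Perm α) (x : α) :
    JoinTop (restrictPerm σ (fun z => (joinSetoid σ τ) x z))
      (restrictPerm τ (fun z => (joinSetoid σ τ) x z)) := by
  classical
  set t := joinSetoid σ τ with htdef
  have hσstep : ∀ z, t z (σ z) := fun z =>
    Setoid.le_def.mp le_sup_left (⟨1, by simp⟩ : σ.SameCycle z (σ z))
  have hτstep : ∀ z, t z (τ z) := fun z =>
    Setoid.le_def.mp le_sup_right (⟨1, by simp⟩ : τ.SameCycle z (τ z))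
  have hinvσ : ∀ z, t x z ↔ t x (σ z) :=
    fun z => ⟨fun h => t.trans h (hσstep z), fun h => t.trans h (t.symm (hσstep z))⟩
  have hinvτ : ∀ z, t x z ↔ t x (τ z) :=
    fun z => ⟨fun h => t.trans h (hτstep z), fun h => t.trans h (t.symm (hτstep z))⟩
  rw [restrictPerm_eq_subtypePerm σ _ hinvσ, restrictPerm_eq_subtypePerm τ _ hinvτ]
  set s' := joinSetoid (σ.subtypePerm (fun z => (hinvσ z).symm)) (τ.subtypePerm (fun z => (hinvτ z).symm)) with hs'
  have key : ∀ a' b' : α, Relation.EqvGen (⇑(sameCycleSetoid σ) ⊔ ⇑(sameCycleSetoid τ)) a' b' →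
      (t x a' ↔ t x b') ∧ ∀ (ha : t x a') (hb : t x b'), s' ⟨a', ha⟩ ⟨b', hb⟩ := by
    intro a' b' h
    induction h with
    | rel a' b' hr =>
      rcases hr with hr | hr
      · have hr' : σ.SameCycle a' b' := hr
        have hj : t a' b' := Setoid.le_def.mp le_sup_left hr'
        refine ⟨⟨fun h => t.trans h hj, fun h => t.trans h (t.symm hj)⟩, fun ha hb => ?_⟩
        exact Setoid.le_def.mp le_sup_left ((subtypePerm_sameCycle_iff σ hinvσ).mpr hr')
      · have hr' : τ.SameCycle a' b' := hr
        have hj : t a' b' := Setoid.le_def.mp le_sup_right hr'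
        refine ⟨⟨fun h => t.trans h hj, fun h => t.trans h (t.symm hj)⟩, fun ha hb => ?_⟩
        exact Setoid.le_def.mp le_sup_right ((subtypePerm_sameCycle_iff τ hinvτ).mpr hr')
    | refl a' => exact ⟨Iff.rfl, fun ha hb => s'.refl _⟩
    | symm a' b' h ih => exact ⟨ih.1.symm, fun ha hb => s'.symm (ih.2 hb ha)⟩
    | trans a' b' c' h1 h2 ih1 ih2 =>
      exact ⟨ih1.1.trans ih2.1, fun ha hc =>
        s'.trans (ih1.2 ha (ih1.1.mp ha)) (ih2.2 (ih1.1.mp ha) hc)⟩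
  intro a b
  have hab : t (a : α) (b : α) := t.trans (t.symm a.2) b.2
  have hab' : Relation.EqvGen (⇑(sameCycleSetoid σ) ⊔ ⇑(sameCycleSetoid τ)) (a : α) (b : α) := by
    have he : t = Relation.EqvGen.setoid (⇑(sameCycleSetoid σ) ⊔ ⇑(sameCycleSetoid τ)) :=
      Setoid.sup_def
    have hcast : (⇑t (a : α) (b : α)) =
        (⇑(Relation.EqvGen.setoid (⇑(sameCycleSetoid σ) ⊔ ⇑(sameCycleSetoid τ))) (a : α) (b : α)) :=
      congrArg (fun s : Setoid α => ⇑s (a : α) (b : α)) he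
    exact Eq.mp hcast hab
  exact (key _ _ hab').2 a.2 b.2

end RestrictMore

section Rotate

lemma sameCycle_finRotate {m : ℕ} (j j' : Fin m) : (finRotate m).SameCycle j j' := by
  match m with
  | 0 => exact j.elim0
  | 1 =>
    have he : j = j' := Subsingleton.elim _ _
    subst he
    exact Perm.SameCycle.refl _ _
  | (k+2) =>
    have hns : ∀ z : Fin (k+2), finRotate (k+2) z ≠ z := by
      intro z
      have hmem : z ∈ (finRotate (k+2)).support := by
        rw [support_finRotate]; exact Finset.mem_univ _
      exact Perm.mem_support.mp hmem
    exact isCycle_finRotate.sameCycle (hns j) (hns j')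

lemma blockRotate_pow {ι : Type*} (n : ι → ℕ) (k : ℕ) (z : (i : ι) × Fin (n i)) :
    ((blockRotate n) ^ k) z = ⟨z.1, ((finRotate (n z.1)) ^ k) z.2⟩ := by
  induction k with
  | zero => rfl
  | succ k ih =>
    rw [pow_succ', Perm.mul_apply, ih, pow_succ', Perm.mul_apply]
    rfl

lemma fst_eq_of_sameCycle_blockRotate {ι : Type*} [Finite ι] {n : ι → ℕ}
    {x y : (i : ι) × Fin (n i)}
    (h : (blockRotate n).SameCycle x y) : x.1 = y.1 :=
  setoid_rel_of_sameCycle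
    ⟨fun a b => a.1 = b.1,
      ⟨fun _ => rfl, fun {a b} h => h.symm, fun {a b c} h h' => by rw [h, h']⟩⟩
    (blockRotate n) (fun _ => rfl) h

lemma sameCycle_blockRotate {ι : Type*} (n : ι → ℕ) {x y : (i : ι) × Fin (n i)}
    (h : x.1 = y.1) : (blockRotate n).SameCycle x y := by
  obtain ⟨i, j⟩ := x
  obtain ⟨i', j'⟩ := y
  cases h
  obtain ⟨k, -, hk⟩ := (sameCycle_finRotate j j').exists_pow_eq'
  refine ⟨(k : ℤ), ?_⟩
  rw [zpow_natCast, blockRotate_pow]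
  exact congrArg (Sigma.mk i) hk

end Rotate

lemma class_pred_eq {α : Type*} (w : Setoid α) {a b : α} (h : w a b) :
    (fun y => w a y) = (fun y => w b y) :=
  funext fun y => propext ⟨fun hh => w.trans (w.symm h) hh, fun hh => w.trans h hh⟩

theorem stmt19 (p q l : ℕ)
    (γ : Equiv.Perm ((i : Fin 3) × Fin (![p, q, l] i)))
    (hγ : γ = blockRotate ![p, q, l])
    (π σ : Equiv.Perm ((i : Fin 3) × Fin (![p, q, l] i)))
    (hσ : SNC γ σ) (hle : le' π (σ⁻¹ * γ))
    (hπ1 : ∀ x, (π x).1 = x.1)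
    (hπ2 : ∀ i : Fin 3,
      SNC (restrictPerm γ (fun x => x.1 = i)) (restrictPerm π (fun x => x.1 = i))) :
    ncRel σ (γ * π⁻¹) ∧ numBlocks σ (γ * π⁻¹) + 2 = numCycles (γ * π⁻¹) := by
  classical
  set τ : Perm ((i : Fin 3) × Fin (![p, q, l] i)) := γ * π⁻¹ with hτdef
  set N := Nat.card ((i : Fin 3) × Fin (![p, q, l] i)) with hN
  -- first-component preservation
  have hγfst : ∀ z, (γ z).1 = z.1 := by intro z; rw [hγ]; rfl
  have hπinvfst : ∀ z, (π⁻¹ z).1 = z.1 := by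
    intro z
    conv_rhs => rw [← Perm.apply_inv_self π z]
    rw [hπ1]
  have hτfst : ∀ z, (τ z).1 = z.1 := by
    intro z
    rw [hτdef, Perm.mul_apply, hγfst, hπinvfst]
  have hfst : ∀ x y, γ.SameCycle x y ↔ x.1 = y.1 := by
    intro x y
    constructor
    · intro h; rw [hγ] at h; exact fst_eq_of_sameCycle_blockRotate h
    · intro h; rw [hγ]; exact sameCycle_blockRotate _ h
  -- positivity of the block sizes
  have hpos : ∀ i : Fin 3, 0 < ![p, q, l] i := by
    intro i
    by_contra hnp
    push_neg at hnp
    have hzero : ![p, q, l] i = 0 := by omega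
    have hemp : IsEmpty {x : (i' : Fin 3) × Fin (![p, q, l] i') // x.1 = i} := by
      refine ⟨?_⟩
      rintro ⟨⟨i', j⟩, hij⟩
      have hii : i' = i := hij
      subst hii
      have hj := j.2
      omega
    have h2 := (hπ2 i).2
    haveI := hemp
    simp only [numCycles] at h2
    rw [card_quot_empty _ hemp, card_quot_empty _ hemp, card_quot_empty _ hemp,
      Nat.card_of_isEmpty] at h2
    omega
  -- number of cycles of γ
  have hNγ : numCycles γ = 3 := by
    rw [hγ, numCycles]
    have hb : Function.Bijective
        (fun c : Quotient (sameCycleSetoid (blockRotate ![p, q, l])) =>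
          Quotient.liftOn' c (fun x => x.1)
            (fun a b hab => fst_eq_of_sameCycle_blockRotate hab)) := by
      constructor
      · intro c d hcd
        induction c using Quotient.inductionOn' with | h x => ?_
        induction d using Quotient.inductionOn' with | h y => ?_
        exact Quotient.sound' (sameCycle_blockRotate _ hcd)
      · intro i
        exact ⟨Quotient.mk'' ⟨i, ⟨0, hpos i⟩⟩, rfl⟩
    rw [Nat.card_eq_of_bijective _ hb]
    simp [Nat.card_eq_fintype_card]
  ---------------------------------------------------------------
  -- STEP A : numCycles π + numCycles (π⁻¹ * γ) = N + 3  (sum over the circles)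
  ---------------------------------------------------------------
  have stepA : numCycles π + numCycles (π⁻¹ * γ) = N + 3 := by
    set u := sameCycleSetoid γ with hu
    haveI : Fintype (Quotient u) := Fintype.ofFinite _
    have hstepπ : ∀ z, u z (π z) := fun z => (hfst z (π z)).mpr (hπ1 z).symm
    have hstepπγ : ∀ z, u z ((π⁻¹ * γ) z) := fun z =>
      (hfst z _).mpr (by rw [Perm.mul_apply, hπinvfst, hγfst])
    set Fπ : Quotient u → ℕ := fun c => Quotient.liftOn' c
      (fun x => numCycles (restrictPerm π (fun y => u x y)))
      (fun a b h => congrArg (fun pp => numCycles (restrictPerm π pp)) (class_pred_eq u h)) with hFπ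
    set Fπγ : Quotient u → ℕ := fun c => Quotient.liftOn' c
      (fun x => numCycles (restrictPerm (π⁻¹ * γ) (fun y => u x y)))
      (fun a b h => congrArg (fun pp => numCycles (restrictPerm (π⁻¹ * γ) pp)) (class_pred_eq u h)) with hFπγ
    set Gu : Quotient u → ℕ := fun c => Quotient.liftOn' c
      (fun x => Nat.card {y // u x y})
      (fun a b h => congrArg (fun pp => Nat.card (Subtype pp)) (class_pred_eq u h)) with hGu
    have hsumπ : numCycles π = ∑ c, Fπ c := numCycles_eq_sum u π hstepπ Fπ (fun x => rfl)
    have hsumπγ : numCycles (π⁻¹ * γ) = ∑ c, Fπγ c :=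
      numCycles_eq_sum u (π⁻¹ * γ) hstepπγ Fπγ (fun x => rfl)
    have hsumN : N = ∑ c, Gu c := card_eq_sum_classes u Gu (fun x => rfl)
    have hcc : ∀ c, Fπ c + Fπγ c = Gu c + 1 := by
      intro c
      induction c using Quotient.inductionOn' with | h x => ?_
      simp only [hFπ, hFπγ, hGu, Quotient.liftOn'_mk'']
      have hpeq : (fun y => u x y) = (fun y : (i : Fin 3) × Fin (![p, q, l] i) => y.1 = x.1) :=
        funext fun y => propext (((hfst x y).trans eq_comm))
      rw [hpeq]
      have hinvπ : ∀ y : (i : Fin 3) × Fin (![p, q, l] i), y.1 = x.1 ↔ (π y).1 = x.1 := fun y => by rw [hπ1]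
      have hinvπinv : ∀ y, y.1 = x.1 ↔ (π⁻¹ y).1 = x.1 := fun y => by rw [hπinvfst]
      have hinvγ : ∀ y, y.1 = x.1 ↔ (γ y).1 = x.1 := fun y => by rw [hγfst]
      have h2 := (hπ2 x.1).2
      rw [restrictPerm_inv π _ hinvπ, restrictPerm_mul π⁻¹ γ _ hinvπinv hinvγ] at h2
      have hγ1 : numCycles (restrictPerm γ (fun y : (i : Fin 3) × Fin (![p, q, l] i) => y.1 = x.1)) = 1 := by
        rw [restrictPerm_eq_subtypePerm γ _ hinvγ]
        haveI : Nonempty {y : (i : Fin 3) × Fin (![p, q, l] i) // y.1 = x.1} := ⟨⟨x, rfl⟩⟩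
        refine numCycles_eq_one _ fun a b => ?_
        exact (subtypePerm_sameCycle_iff γ hinvγ).mpr ((hfst _ _).mpr (a.2.trans b.2.symm))
      rw [hγ1] at h2
      omega
    have hcard3 : (∑ _c : Quotient u, 1) = 3 := by
      rw [Finset.sum_const, smul_eq_mul, mul_one, Finset.card_univ,
        ← Nat.card_eq_fintype_card]
      exact hNγ
    calc numCycles π + numCycles (π⁻¹ * γ) = ∑ c, (Fπ c + Fπγ c) := by
          rw [hsumπ, hsumπγ, Finset.sum_add_distrib]
      _ = ∑ c, (Gu c + 1) := Finset.sum_congr rfl (fun c _ => hcc c)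
      _ = (∑ c, Gu c) + ∑ _c, 1 := Finset.sum_add_distrib
      _ = N + 3 := by rw [← hsumN, hcard3]
  ---------------------------------------------------------------
  -- STEP B : numCycles π + numCycles (π⁻¹ * (σ⁻¹ * γ)) = N + numCycles (σ⁻¹ * γ)
  ---------------------------------------------------------------
  have stepB : numCycles π + numCycles (π⁻¹ * (σ⁻¹ * γ)) = N + numCycles (σ⁻¹ * γ) := by
    set w := sameCycleSetoid (σ⁻¹ * γ) with hw
    haveI : Fintype (Quotient w) := Fintype.ofFinite _
    have hstepπ : ∀ z, w z (π z) := fun z => hle.1 z (π z) ⟨1, by simp⟩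
    have hstepw : ∀ z, w z ((π⁻¹ * (σ⁻¹ * γ)) z) := by
      intro z
      have h1 : w z ((σ⁻¹ * γ) z) := ⟨1, by simp⟩
      have h2 : w ((σ⁻¹ * γ) z) (π⁻¹ ((σ⁻¹ * γ) z)) := by
        have h3 := hstepπ (π⁻¹ ((σ⁻¹ * γ) z))
        rw [Perm.apply_inv_self] at h3
        exact w.symm h3
      exact w.trans h1 h2
    set Fπ : Quotient w → ℕ := fun c => Quotient.liftOn' c
      (fun x => numCycles (restrictPerm π (fun y => w x y)))
      (fun a b h => congrArg (fun pp => numCycles (restrictPerm π pp)) (class_pred_eq w h)) with hFπ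
    set Fw : Quotient w → ℕ := fun c => Quotient.liftOn' c
      (fun x => numCycles (restrictPerm (π⁻¹ * (σ⁻¹ * γ)) (fun y => w x y)))
      (fun a b h => congrArg (fun pp => numCycles (restrictPerm (π⁻¹ * (σ⁻¹ * γ)) pp)) (class_pred_eq w h)) with hFw
    set Gw : Quotient w → ℕ := fun c => Quotient.liftOn' c
      (fun x => Nat.card {y // w x y})
      (fun a b h => congrArg (fun pp => Nat.card (Subtype pp)) (class_pred_eq w h)) with hGw
    have hsumπ : numCycles π = ∑ c, Fπ c := numCycles_eq_sum w π hstepπ Fπ (fun x => rfl)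
    have hsumw : numCycles (π⁻¹ * (σ⁻¹ * γ)) = ∑ c, Fw c :=
      numCycles_eq_sum w (π⁻¹ * (σ⁻¹ * γ)) hstepw Fw (fun x => rfl)
    have hsumN : N = ∑ c, Gw c := card_eq_sum_classes w Gw (fun x => rfl)
    have hcc : ∀ c, Fπ c + Fw c = Gw c + 1 := by
      intro c
      induction c using Quotient.inductionOn' with | h x => ?_
      simp only [hFπ, hFw, hGw, Quotient.liftOn'_mk'']
      have hinvπ : ∀ y, w x y ↔ w x (π y) :=
        fun y => ⟨fun h => w.trans h (hstepπ y), fun h => w.trans h (w.symm (hstepπ y))⟩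
      have hinvπinv : ∀ y, w x y ↔ w x (π⁻¹ y) := fun y => by
        have h2 := hinvπ (π⁻¹ y)
        rw [Perm.apply_inv_self] at h2
        exact h2.symm
      have hinvσγ : ∀ y, w x y ↔ w x ((σ⁻¹ * γ) y) := fun y =>
        ⟨fun h => w.trans h ⟨1, by simp⟩, fun h => w.trans h (w.symm ⟨1, by simp⟩)⟩
      have h2 : numCycles (restrictPerm π fun y => w x y) +
          numCycles ((restrictPerm π fun y => w x y)⁻¹ *
            restrictPerm (σ⁻¹ * γ) fun y => w x y) =
          Nat.card {y // w x y} + 1 := hle.2 x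
      rw [restrictPerm_inv π _ hinvπ, restrictPerm_mul π⁻¹ (σ⁻¹ * γ) _ hinvπinv hinvσγ] at h2
      exact h2
    have hcardw : (∑ _c : Quotient w, 1) = numCycles (σ⁻¹ * γ) := by
      rw [Finset.sum_const, smul_eq_mul, mul_one, Finset.card_univ,
        ← Nat.card_eq_fintype_card]
      rfl
    calc numCycles π + numCycles (π⁻¹ * (σ⁻¹ * γ)) = ∑ c, (Fπ c + Fw c) := by
          rw [hsumπ, hsumw, Finset.sum_add_distrib]
      _ = ∑ c, (Gw c + 1) := Finset.sum_congr rfl (fun c _ => hcc c)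
      _ = (∑ c, Gw c) + ∑ _c, 1 := Finset.sum_add_distrib
      _ = N + numCycles (σ⁻¹ * γ) := by rw [← hsumN, hcardw]
  ---------------------------------------------------------------
  -- conjugation identities
  ---------------------------------------------------------------
  have hconj1 : numCycles τ = numCycles (π⁻¹ * γ) := by
    have h := numCycles_conj γ (π⁻¹ * γ)
    have he : γ * (π⁻¹ * γ) * γ⁻¹ = τ := by rw [hτdef]; group
    rw [he] at h
    exact h
  have hconj2 : numCycles (σ⁻¹ * τ) = numCycles (π⁻¹ * (σ⁻¹ * γ)) := by
    have h := numCycles_conj π (π⁻¹ * (σ⁻¹ * γ))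
    have he : π * (π⁻¹ * (σ⁻¹ * γ)) * π⁻¹ = σ⁻¹ * τ := by rw [hτdef]; group
    rw [he] at h
    exact h
  have e1 : numCycles π + numCycles τ = N + 3 := by rw [hconj1]; exact stepA
  have e2 : numCycles π + numCycles (σ⁻¹ * τ) = N + numCycles (σ⁻¹ * γ) := by
    rw [hconj2]; exact stepB
  have e3 : numCycles σ + numCycles (σ⁻¹ * γ) + 3 = N + 2 := by
    have h := hσ.2
    rw [hNγ] at h
    exact h
  ---------------------------------------------------------------
  -- STEP C : connectivity bound : numBlocks σ τ + 2 ≤ numCycles τ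
  ---------------------------------------------------------------
  set t := joinSetoid σ τ with htdef
  have e5 : numBlocks σ τ + 2 ≤ numCycles τ := by
    set u := sameCycleSetoid γ with hu
    have htop : ∀ x y, (t ⊔ u) x y := by
      intro x y
      have h := hσ.1 x y
      have hle2 : joinSetoid σ γ ≤ t ⊔ u :=
        sup_le (le_trans (le_sup_left : sameCycleSetoid σ ≤ t) le_sup_left) le_sup_right
      exact Setoid.le_def.mp hle2 h
    have hconn := conn u (Nat.card (Quotient t)) t le_rfl htop
    have hcardu : Nat.card (Quotient u) = 3 := hNγ
    have hτle : sameCycleSetoid τ ≤ t ⊓ u := by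
      refine le_inf le_sup_right (Setoid.le_def.mpr fun {x y} h => ?_)
      refine (hfst x y).mpr ?_
      exact setoid_rel_of_sameCycle
        ⟨fun a b => a.1 = b.1,
          ⟨fun _ => rfl, fun {a b} h => h.symm, fun {a b c} h h' => by rw [h, h']⟩⟩
        τ (fun z => (hτfst z).symm) h
    have hinfle : Nat.card (Quotient (t ⊓ u)) ≤ numCycles τ := card_quot_le_of_le hτle
    have hb : numBlocks σ τ = Nat.card (Quotient t) := rfl
    omega
  ---------------------------------------------------------------
  -- STEP D : per-block Euler bound and global sum
  ---------------------------------------------------------------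
  haveI : Fintype (Quotient t) := Fintype.ofFinite _
  have hstepσ : ∀ z, t z (σ z) := fun z =>
    Setoid.le_def.mp le_sup_left (⟨1, by simp⟩ : σ.SameCycle z (σ z))
  have hstepτ : ∀ z, t z (τ z) := fun z =>
    Setoid.le_def.mp le_sup_right (⟨1, by simp⟩ : τ.SameCycle z (τ z))
  have hstepστ : ∀ z, t z ((σ⁻¹ * τ) z) := by
    intro z
    have h1 : t ((σ⁻¹ * τ) z) (τ z) := by
      have h2 := hstepσ ((σ⁻¹ * τ) z)
      have h3 : σ ((σ⁻¹ * τ) z) = τ z := by simp [Perm.mul_apply]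
      rwa [h3] at h2
    exact t.trans (hstepτ z) (t.symm h1)
  set Fσ : Quotient t → ℕ := fun c => Quotient.liftOn' c
    (fun x => numCycles (restrictPerm σ (fun y => t x y)))
    (fun a b h => congrArg (fun pp => numCycles (restrictPerm σ pp)) (class_pred_eq t h)) with hFσ
  set Fστ : Quotient t → ℕ := fun c => Quotient.liftOn' c
    (fun x => numCycles (restrictPerm (σ⁻¹ * τ) (fun y => t x y)))
    (fun a b h => congrArg (fun pp => numCycles (restrictPerm (σ⁻¹ * τ) pp)) (class_pred_eq t h)) with hFστ
  set Fτ : Quotient t → ℕ := fun c => Quotient.liftOn' c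
    (fun x => numCycles (restrictPerm τ (fun y => t x y)))
    (fun a b h => congrArg (fun pp => numCycles (restrictPerm τ pp)) (class_pred_eq t h)) with hFτ
  set Gt : Quotient t → ℕ := fun c => Quotient.liftOn' c
    (fun x => Nat.card {y // t x y})
    (fun a b h => congrArg (fun pp => Nat.card (Subtype pp)) (class_pred_eq t h)) with hGt
  have hsumσ : numCycles σ = ∑ c, Fσ c := numCycles_eq_sum t σ hstepσ Fσ (fun x => rfl)
  have hsumστ : numCycles (σ⁻¹ * τ) = ∑ c, Fστ c :=
    numCycles_eq_sum t (σ⁻¹ * τ) hstepστ Fστ (fun x => rfl)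
  have hsumτ : numCycles τ = ∑ c, Fτ c := numCycles_eq_sum t τ hstepτ Fτ (fun x => rfl)
  have hsumN : N = ∑ c, Gt c := card_eq_sum_classes t Gt (fun x => rfl)
  -- invariance helpers per class
  have hinvσ : ∀ x, ∀ z, t x z ↔ t x (σ z) := fun x z =>
    ⟨fun h => t.trans h (hstepσ z), fun h => t.trans h (t.symm (hstepσ z))⟩
  have hinvτ : ∀ x, ∀ z, t x z ↔ t x (τ z) := fun x z =>
    ⟨fun h => t.trans h (hstepτ z), fun h => t.trans h (t.symm (hstepτ z))⟩
  have hinvσinv : ∀ x, ∀ z, t x z ↔ t x (σ⁻¹ z) := fun x z => by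
    have h2 := hinvσ x (σ⁻¹ z)
    rw [Perm.apply_inv_self] at h2
    exact h2.symm
  -- per-block JoinTop (as a statement about the product pair)
  have hJT : ∀ x, ∀ a b : {y // t x y},
      (joinSetoid (restrictPerm σ (fun y => t x y))
        ((restrictPerm σ (fun y => t x y))⁻¹ * restrictPerm τ (fun y => t x y))) a b := by
    intro x a b
    have hJ := joinTop_restrict σ τ x a b
    have hlej : joinSetoid (restrictPerm σ (fun y => t x y)) (restrictPerm τ (fun y => t x y)) ≤
        joinSetoid (restrictPerm σ (fun y => t x y))
          ((restrictPerm σ (fun y => t x y))⁻¹ * restrictPerm τ (fun y => t x y)) := by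
      apply sup_le le_sup_left
      refine Setoid.le_def.mpr fun {c d} h => ?_
      refine setoid_rel_of_sameCycle _ _ (fun z => ?_) h
      have hz : (restrictPerm τ (fun y => t x y)) z =
          (restrictPerm σ (fun y => t x y))
            (((restrictPerm σ (fun y => t x y))⁻¹ * restrictPerm τ (fun y => t x y)) z) := by
        simp [Perm.mul_apply]
      rw [hz]
      set J := joinSetoid (restrictPerm σ (fun y => t x y))
        ((restrictPerm σ (fun y => t x y))⁻¹ * restrictPerm τ (fun y => t x y)) with hJ
      have h1 : J z (((restrictPerm σ (fun y => t x y))⁻¹ * restrictPerm τ (fun y => t x y)) z) :=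
        Setoid.le_def.mp le_sup_right ⟨1, by simp⟩
      have h2 : J (((restrictPerm σ (fun y => t x y))⁻¹ * restrictPerm τ (fun y => t x y)) z)
          ((restrictPerm σ (fun y => t x y))
            (((restrictPerm σ (fun y => t x y))⁻¹ * restrictPerm τ (fun y => t x y)) z)) :=
        Setoid.le_def.mp le_sup_left ⟨1, by simp⟩
      exact J.trans h1 h2
    exact Setoid.le_def.mp hlej hJ
  have hblock : ∀ c : Quotient t, Fσ c + Fστ c + Fτ c ≤ Gt c + 2 := by
    intro c
    induction c using Quotient.inductionOn' with | h x => ?_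
    simp only [hFσ, hFστ, hFτ, hGt, Quotient.liftOn'_mk'']
    haveI : Nonempty {y // t x y} := ⟨⟨x, t.refl x⟩⟩
    have he := euler (restrictPerm σ (fun y => t x y))
      ((restrictPerm σ (fun y => t x y))⁻¹ * restrictPerm τ (fun y => t x y))
    have hmulsimp : restrictPerm σ (fun y => t x y) *
        ((restrictPerm σ (fun y => t x y))⁻¹ * restrictPerm τ (fun y => t x y)) =
        restrictPerm τ (fun y => t x y) := by group
    rw [hmulsimp] at he
    have hnb : numBlocks (restrictPerm σ (fun y => t x y))
        ((restrictPerm σ (fun y => t x y))⁻¹ * restrictPerm τ (fun y => t x y)) = 1 := by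
      rw [numBlocks, Nat.card_eq_one_iff_unique]
      refine ⟨⟨fun c d => ?_⟩, ⟨Quotient.mk'' ⟨x, t.refl x⟩⟩⟩
      induction c using Quotient.inductionOn' with | h a => ?_
      induction d using Quotient.inductionOn' with | h b => ?_
      exact Quotient.sound' (hJT x a b)
    rw [hnb, mul_one] at he
    have hprod : (restrictPerm σ (fun y => t x y))⁻¹ * restrictPerm τ (fun y => t x y) =
        restrictPerm (σ⁻¹ * τ) (fun y => t x y) := by
      rw [restrictPerm_inv σ _ (hinvσ x), restrictPerm_mul σ⁻¹ τ _ (hinvσinv x) (hinvτ x)]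
    rw [hprod] at he
    exact he
  have e4 : numCycles σ + numCycles (σ⁻¹ * τ) + numCycles τ ≤ N + 2 * numBlocks σ τ := by
    have hsum : numCycles σ + numCycles (σ⁻¹ * τ) + numCycles τ =
        ∑ c, (Fσ c + Fστ c + Fτ c) := by
      rw [hsumσ, hsumστ, hsumτ, Finset.sum_add_distrib, Finset.sum_add_distrib]
    have hle4 : (∑ c, (Fσ c + Fστ c + Fτ c)) ≤ ∑ c, (Gt c + 2) :=
      Finset.sum_le_sum (fun c _ => hblock c)
    have hRHS : (∑ c : Quotient t, (Gt c + 2)) = N + 2 * numBlocks σ τ := by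
      rw [Finset.sum_add_distrib, ← hsumN, Finset.sum_const, smul_eq_mul, Finset.card_univ,
        ← Nat.card_eq_fintype_card]
      have : numBlocks σ τ = Nat.card (Quotient t) := rfl
      omega
    omega
  ---------------------------------------------------------------
  -- final arithmetic
  ---------------------------------------------------------------
  have hb2 : numBlocks σ τ + 2 = numCycles τ := by omega
  refine ⟨?_, hb2⟩
  -- per-block equality extraction
  have htotal : (∑ c, (Fσ c + Fστ c + Fτ c)) = ∑ c, (Gt c + 2) := by
    have hsum : numCycles σ + numCycles (σ⁻¹ * τ) + numCycles τ =
        ∑ c, (Fσ c + Fστ c + Fτ c) := by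
      rw [hsumσ, hsumστ, hsumτ, Finset.sum_add_distrib, Finset.sum_add_distrib]
    have hRHS : (∑ c : Quotient t, (Gt c + 2)) = N + 2 * numBlocks σ τ := by
      rw [Finset.sum_add_distrib, ← hsumN, Finset.sum_const, smul_eq_mul, Finset.card_univ,
        ← Nat.card_eq_fintype_card]
      have : numBlocks σ τ = Nat.card (Quotient t) := rfl
      omega
    omega
  have hbeq : ∀ c : Quotient t, Fσ c + Fστ c + Fτ c = Gt c + 2 :=
    fun c => (Finset.sum_eq_sum_iff_of_le (fun c _ => hblock c)).mp htotal c (Finset.mem_univ c)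
  -- conclude ncRel
  intro x
  constructor
  · exact joinTop_restrict σ τ x
  · have hx := hbeq (Quotient.mk'' x)
    simp only [hFσ, hFστ, hFτ, hGt, Quotient.liftOn'_mk''] at hx
    have hprod : (restrictPerm σ (fun y => t x y))⁻¹ * restrictPerm τ (fun y => t x y) =
        restrictPerm (σ⁻¹ * τ) (fun y => t x y) := by
      rw [restrictPerm_inv σ _ (hinvσ x), restrictPerm_mul σ⁻¹ τ _ (hinvσinv x) (hinvτ x)]
    rw [← hprod] at hx
    exact hx
end ThirdOrderFree
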